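/- Let T be a bounded operator on a complex Hilbert space H and q a complex number with |q| ≤ 1. Then w_q(T) ≤ ( |q|²·w(T)² + (1−|q|²)·‖T‖² + 2|q|√(1−|q|²)·w(T)·‖T‖ )^{1/2}, where w(T) is the classical numerical radius and w_q(T) the q-numerical radius. -/

import Mathlib

open scoped InnerProductSpace

variable {H : Type*} [NormedAddCommGroup H] [InnerProductSpace ℂ H] [CompleteSpace H]

/-- The `q`-numerical radius of `T`. -/
noncomputable def wq (T : H →L[ℂ] H) (q : ℂ) : ℝ :=
  sSup {r : ℝ | ∃ x y : H, ‖x‖ = 1 ∧ ‖y‖ = 1 ∧ (@inner ℂ H _ y x) = q ∧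
    r = ‖@inner ℂ H _ y (T x)‖}

/-- The classical numerical radius of `T`. -/
noncomputable def wnum (T : H →L[ℂ] H) : ℝ :=
  sSup {r : ℝ | ∃ x : H, ‖x‖ = 1 ∧ r = ‖@inner ℂ H _ x (T x)‖}

lemma wnum_ge (T : H →L[ℂ] H) (x : H) (hx : ‖x‖ = 1) :
    ‖@inner ℂ H _ x (T x)‖ ≤ wnum T := by
  apply le_csSup
  · refine ⟨‖T‖, ?_⟩
    rintro r ⟨z, hz, rfl⟩
    calc ‖@inner ℂ H _ z (T z)‖ ≤ ‖z‖ * ‖T z‖ := by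
          exact norm_inner_le_norm z (T z)
      _ ≤ ‖z‖ * (‖T‖ * ‖z‖) := by
          exact mul_le_mul_of_nonneg_left (T.le_opNorm z) (norm_nonneg z)
      _ = ‖T‖ := by rw [hz]; ring
  · exact ⟨x, hx, rfl⟩

lemma wnum_nonneg (hdim : 2 ≤ Module.rank ℂ H) (T : H →L[ℂ] H) : 0 ≤ wnum T := by
  have : Nontrivial H := by
    rw [← rank_pos_iff_nontrivial (R := ℂ)]
    exact lt_of_lt_of_le (by norm_num) hdim
  obtain ⟨x, hx⟩ := exists_ne (0 : H)
  have hxn : ‖x‖ ≠ 0 := norm_ne_zero_iff.2 hx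
  have h1 : ‖(‖x‖⁻¹ : ℝ) • x‖ = 1 := by
    rw [norm_smul, norm_inv, norm_norm, inv_mul_cancel₀ hxn]
  exact le_trans (norm_nonneg _) (wnum_ge T _ h1)

theorem stmt6 (hdim : 2 ≤ Module.rank ℂ H) (T : H →L[ℂ] H)
    (q : ℂ) (hq : ‖q‖ ≤ 1) :
    wq T q ≤
      Real.sqrt (‖q‖ ^ 2 * (wnum T) ^ 2 + (1 - ‖q‖ ^ 2) * ‖T‖ ^ 2 +
        2 * ‖q‖ * Real.sqrt (1 - ‖q‖ ^ 2) * wnum T * ‖T‖) := by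
  set a : ℝ := ‖q‖ with ha
  have ha0 : 0 ≤ a := norm_nonneg q
  have h1a : 0 ≤ 1 - a ^ 2 := by nlinarith
  set s : ℝ := Real.sqrt (1 - a ^ 2) with hs
  have hs0 : 0 ≤ s := Real.sqrt_nonneg _
  have hw0 : 0 ≤ wnum T := wnum_nonneg hdim T
  set B : ℝ := a * wnum T + s * ‖T‖ with hB
  have hB0 : 0 ≤ B := by positivity
  have hsq : a ^ 2 * (wnum T) ^ 2 + (1 - a ^ 2) * ‖T‖ ^ 2 +
      2 * a * s * wnum T * ‖T‖ = B ^ 2 := by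
    have hs2 : s ^ 2 = 1 - a ^ 2 := Real.sq_sqrt h1a
    rw [hB]; ring_nf; nlinarith [hs2]
  rw [hsq, Real.sqrt_sq hB0]
  apply Real.sSup_le _ hB0
  rintro r ⟨x, y, hx, hy, hyx, rfl⟩
  -- decompose y = (starRingEnd ℂ q) • x + z
  set z : H := y - (starRingEnd ℂ q) • x with hz
  have hzx : @inner ℂ H _ x z = 0 := by
    rw [hz, inner_sub_right, inner_smul_right]
    rw [← inner_conj_symm x y, hyx, inner_self_eq_norm_sq_to_K, hx]
    push_cast; ring
  have hxz : @inner ℂ H _ z x = 0 := by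
    have := congrArg (starRingEnd ℂ) hzx
    simpa [inner_conj_symm] using this
  have hznorm : ‖z‖ ≤ s := by
    have : ‖z‖ ^ 2 = 1 - a ^ 2 := by
      have hyz : y = (starRingEnd ℂ q) • x + z := by rw [hz]; abel
      have horth : @inner ℂ H _ ((starRingEnd ℂ q) • x) z = 0 := by
        rw [inner_smul_left, hzx, mul_zero]
      have hpy := norm_add_sq_eq_norm_sq_add_norm_sq_of_inner_eq_zero _ _ horth
      rw [← hyz] at hpy
      have hcq : ‖(starRingEnd ℂ q) • x‖ = a := by
        rw [norm_smul, hx, mul_one]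
        simp [ha]
      nlinarith [hpy, hy, hcq]
    rw [hs, ← this, Real.sqrt_sq (norm_nonneg z)]
  have hdecomp : @inner ℂ H _ y (T x) = q * @inner ℂ H _ x (T x) + @inner ℂ H _ z (T x) := by
    have : y = (starRingEnd ℂ q) • x + z := by rw [hz]; abel
    rw [this, inner_add_left, inner_smul_left]
    simp
  calc ‖@inner ℂ H _ y (T x)‖
      ≤ ‖q * @inner ℂ H _ x (T x)‖ + ‖@inner ℂ H _ z (T x)‖ := by
        rw [hdecomp]; exact norm_add_le _ _
    _ ≤ a * wnum T + s * ‖T‖ := by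
        gcongr
        · rw [norm_mul]
          exact mul_le_mul_of_nonneg_left (wnum_ge T x hx) ha0
        · calc ‖@inner ℂ H _ z (T x)‖ ≤ ‖z‖ * ‖T x‖ := by
                exact norm_inner_le_norm _ _
            _ ≤ s * ‖T‖ := by
                have := T.le_opNorm x
                rw [hx, mul_one] at this
                exact mul_le_mul hznorm this (norm_nonneg _) hs0
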